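/- arXiv:1710.06783 — 6 statements merged into one kernel-verified Lean document; each statement's English description precedes it below -/
import Mathlib

section
/- Let D be an integral domain, let 𝒯 be a finite multiset of elements of D, and let f = ∏_{r ∈ 𝒯} (x − r) ∈ D[x]. If Q is a nonzero prime ideal of D, then d(f) ⊆ Q if and only if 𝒯 contains a complete system of residues modulo Q, i.e., for every a ∈ D there exists r ∈ 𝒯 with a − r ∈ Q. -/
set_option linter.unusedSectionVars false

open Polynomial

variable (D : Type*) [CommRing D] [IsDomain D]

/-- The fixed divisor `d(g)` of a polynomial `g ∈ D[X]`: the ideal of `D`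
generated by the values `g(a)`, `a ∈ D`. -/
def fixDiv (g : Polynomial D) : Ideal D :=
  Ideal.span (Set.range fun a : D => g.eval a)

/-- **Lemma (first part).** Let `D` be an integral domain, `T` a finite multiset of
elements of `D` and `f = ∏_{r ∈ T} (X - r)`. For a nonzero prime ideal `Q` of `D`,
the fixed divisor `d(f)` is contained in `Q` iff `T` contains a complete system of
residues modulo `Q`, i.e. iff every `a ∈ D` is congruent mod `Q` to some `r ∈ T`. -/
theorem fixDiv_le_prime_iff_complete_residues
    (T : Multiset D) (Q : Ideal D) (hQ : Q.IsPrime) (hQ0 : Q ≠ ⊥) :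
    fixDiv D (T.map fun r => X - C r).prod ≤ Q ↔
      ∀ a : D, ∃ r ∈ T, a - r ∈ Q := by
  rw [fixDiv, Ideal.span_le]
  constructor
  · intro h a
    have ha : ((T.map fun r => X - C r).prod.eval a) ∈ Q := h ⟨a, rfl⟩
    rw [eval_multiset_prod, Multiset.map_map] at ha
    obtain ⟨x, hx, hxQ⟩ := (hQ.multiset_prod_mem_iff_exists_mem _).1 ha
    obtain ⟨r, hr, rfl⟩ := Multiset.mem_map.1 hx
    exact ⟨r, hr, by simpa using hxQ⟩
  · rintro h _ ⟨a, rfl⟩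
    obtain ⟨r, hr, hrQ⟩ := h a
    show (Multiset.map (fun r => X - C r) T).prod.eval a ∈ Q
    rw [eval_multiset_prod, Multiset.map_map]
    refine (hQ.multiset_prod_mem_iff_exists_mem _).2 ⟨a - r, Multiset.mem_map.2 ⟨r, hr, by simp⟩, hrQ⟩
end

section
/- Let D be a Dedekind domain, Q a nonzero prime ideal of D with associated Q-adic valuation v_Q, and 𝒯 a finite multiset of elements of D with f = ∏_{r ∈ 𝒯}(x − r) ∈ D[x]. Suppose 𝒯 = 𝒯₀ ⊎ 𝒯₁ ⊎ ⋯ ⊎ 𝒯ₑ (disjoint union of multisets) such that: (1) for all 1 ≤ i ≤ e, 𝒯ᵢ is a complete system of residues modulo Q, and for each residue class modulo Q the representatives of that class in the different 𝒯ᵢ are congruent to one another modulo Q²; and (2) there exists z ∈ D such that s ≢ z mod Q for every s ∈ 𝒯₀. Then v_Q(d(f)) = e, i.e., Q appears with exponent exactly e in the prime ideal factorization of the fixed divisor d(f). -/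
set_option linter.unusedSectionVars false

open Polynomial IsDedekindDomain HeightOneSpectrum Multiplicative

variable (D : Type*) [CommRing D] [IsDomain D]

/-- **Lemma (second part).** Let `D` be a Dedekind domain, `Q` a nonzero prime ideal,
and `T = T₀ ⊎ T 1 ⊎ ⋯ ⊎ T e` a finite multiset of elements of `D` with
`f = ∏_{r ∈ T} (X - r)` such that:
(1) each `T i` is a complete system of residues modulo `Q` (exactly one element
of `T i`, with multiplicity, in each residue class mod `Q`), and representatives of the
same residue class in the various `T i` are congruent modulo `Q²`;
(2) there is `z ∈ D` with `s ≢ z mod Q` for all `s ∈ T₀`.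
Then `v_Q(d(f)) = e`, i.e. `d(f) ⊆ Q^e` but `d(f) ⊄ Q^(e+1)`. -/
theorem fixDiv_val_eq
    [IsDedekindDomain D] (hD : ¬ IsField D)
    (Q : Ideal D) (hQ : Q.IsPrime) (hQ0 : Q ≠ ⊥) [DecidablePred (· ∈ Q)]
    (e : ℕ) (T0 : Multiset D) (T : Fin e → Multiset D)
    (hcomplete : ∀ i, ∀ a : D, ((T i).countP fun r => a - r ∈ Q) = 1)
    (hcong : ∀ i j, ∀ r ∈ T i, ∀ s ∈ T j, r - s ∈ Q → r - s ∈ Q ^ 2)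
    (z : D) (hz : ∀ s ∈ T0, s - z ∉ Q) :
    fixDiv D (((T0 + ∑ i, T i).map fun r => X - C r).prod) ≤ Q ^ e ∧
      ¬ fixDiv D (((T0 + ∑ i, T i).map fun r => X - C r).prod) ≤ Q ^ (e + 1) := by
  classical
  set v : HeightOneSpectrum D := ⟨Q, hQ, hQ0⟩ with hv
  have hmem : ∀ (x : D) (n : ℕ), x ∈ Q ^ n ↔ v.intValuation x ≤ ofAdd (-(n : ℤ)) := by
    intro x n
    exact Ideal.dvd_span_singleton.symm.trans (v.intValuation_le_pow_iff_dvd x n).symm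
  have hone : ∀ x : D, x ∉ Q → v.intValuation x = 1 := by
    intro x hx
    refine le_antisymm (v.intValuation_le_one x) (not_lt.mp fun h => hx ?_)
    rw [intValuation_apply] at h
    exact Ideal.dvd_span_singleton.mp ((v.intValuation_lt_one_iff_dvd x).mp h)
  have heval : ∀ (a : D) (S : Multiset D),
      ((S.map fun r => X - C r).prod).eval a = (S.map fun r => a - r).prod := by
    intro a S
    rw [eval_multiset_prod, Multiset.map_map]
    congr 1
    refine Multiset.map_congr rfl fun r _ => ?_
    simp
  have hmapsum : ∀ g : D → D,
      ((∑ i, T i).map g).prod = ∏ i, ((T i).map g).prod := by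
    intro g
    rw [show (∑ i, T i).map g = ∑ i, (T i).map g from
      map_sum (Multiset.mapAddMonoidHom g) T Finset.univ, Multiset.prod_sum]
  have hrep : ∀ (i : Fin e) (a : D), ∃ r ∈ T i, (a - r ∈ Q) ∧
      ∀ s ∈ (T i).erase r, a - s ∉ Q := by
    intro i a
    have h1 := hcomplete i a
    obtain ⟨r, hr, hrQ⟩ := Multiset.countP_pos.mp (by omega : 0 < (T i).countP fun r => a - r ∈ Q)
    refine ⟨r, hr, hrQ, ?_⟩
    have hc := Multiset.cons_erase hr
    rw [← hc, Multiset.countP_cons, if_pos hrQ] at h1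
    exact Multiset.countP_eq_zero.mp (by omega)
  constructor
  · rw [fixDiv, Ideal.span_le]
    rintro _ ⟨a, rfl⟩
    simp only [SetLike.mem_coe]
    rw [heval, Multiset.map_add, Multiset.prod_add, hmapsum]
    refine Ideal.mul_mem_left _ _ ?_
    rw [show Q ^ e = ∏ _i : Fin e, Q by simp]
    refine Ideal.prod_mem_prod fun i _ => ?_
    obtain ⟨r, hr, hrQ, -⟩ := hrep i a
    obtain ⟨t, ht⟩ := Multiset.exists_cons_of_mem (Multiset.mem_map_of_mem (fun r => a - r) hr)
    rw [ht, Multiset.prod_cons]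
    exact Ideal.mul_mem_right _ _ hrQ
  · -- choose a good evaluation point a
    obtain ⟨a, haT0, haT⟩ : ∃ a : D, (∀ s ∈ T0, a - s ∉ Q) ∧
        ∀ i, ∀ r ∈ T i, a - r ∈ Q → a - r ∉ Q ^ 2 := by
      rcases Nat.eq_zero_or_pos e with he | he
      · exact ⟨z, fun s hs h => hz s hs (by rw [← neg_sub]; exact neg_mem h),
          fun i => absurd i.2 (by omega)⟩
      · obtain ⟨r0, hr0T, hr0Q, -⟩ := hrep ⟨0, he⟩ z
        obtain ⟨q, hqQ, hq2⟩ := SetLike.exists_of_lt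
          (by simpa using Ideal.pow_succ_lt_pow (P := Q) hQ0 1)
        refine ⟨r0 + q, fun s hs h => ?_, fun i r hr h => fun h2 => hq2 ?_⟩
        · have haz : r0 + q - z ∈ Q := by
            have : -(z - r0) + q ∈ Q := Q.add_mem (neg_mem hr0Q) hqQ
            convert this using 1; ring
          exact hz s hs (by
            have := Q.sub_mem haz h
            convert this using 1; ring)
        · -- q ∈ Q ^ 2
          have hrr0 : r - r0 ∈ Q := by
            have h3 : q - (r0 + q - r) ∈ Q := Q.sub_mem hqQ h
            convert h3 using 1; ring
          have := hcong i ⟨0, he⟩ r hr r0 hr0T hrr0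
          have : (r0 + q - r) + (r - r0) ∈ Q ^ 2 := (Q ^ 2).add_mem h2 this
          convert this using 1; ring
    -- compute the valuation of f(a)
    have key : ∀ i, v.intValuation (((T i).map fun r => a - r).prod) = ↑(ofAdd (-1 : ℤ)) := by
      intro i
      obtain ⟨r, hr, hrQ, hrest⟩ := hrep i a
      have hc : (T i).map (fun r => a - r) = (a - r) ::ₘ ((T i).erase r).map fun r => a - r := by
        rw [← Multiset.map_cons, Multiset.cons_erase hr]
      rw [hc, Multiset.prod_cons, map_mul]
      have h2 : v.intValuation ((((T i).erase r).map fun r => a - r).prod) = 1 := by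
        rw [map_multiset_prod]
        refine Multiset.prod_eq_one fun x hx => ?_
        rw [Multiset.map_map] at hx
        obtain ⟨s, hs, rfl⟩ := Multiset.mem_map.mp hx
        exact hone _ (hrest s hs)
      rw [h2, mul_one]
      -- v (a - r) = ofAdd (-1)
      have hle : v.intValuation (a - r) ≤ ↑(ofAdd (-1 : ℤ)) := by
        have := (hmem (a - r) 1).mp (by simpa using hrQ)
        simpa using this
      have hnle : ¬ v.intValuation (a - r) ≤ ↑(ofAdd (-2 : ℤ)) := by
        intro hle2
        exact haT i r hr hrQ ((hmem (a - r) 2).mpr (by simpa using hle2))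
      have hne : v.intValuation (a - r) ≠ 0 := by
        intro h0
        exact hnle (by rw [h0]; exact zero_le')
      obtain ⟨u, hu⟩ := WithZero.ne_zero_iff_exists.mp hne
      rw [← hu] at hle hnle ⊢
      rw [WithZero.coe_le_coe] at hle hnle
      rw [WithZero.coe_inj]
      rw [show u = ofAdd u.toAdd from (ofAdd_toAdd u).symm] at hle hnle ⊢
      rw [ofAdd_le] at hle hnle
      congr 1
      omega
    have hval : v.intValuation ((((T0 + ∑ i, T i)).map fun r => a - r).prod)
        = ↑(ofAdd (-(e : ℤ))) := by
      rw [Multiset.map_add, Multiset.prod_add, map_mul, hmapsum, map_prod]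
      have h0 : v.intValuation ((T0.map fun r => a - r).prod) = 1 := by
        rw [map_multiset_prod]
        refine Multiset.prod_eq_one fun x hx => ?_
        rw [Multiset.map_map] at hx
        obtain ⟨s, hs, rfl⟩ := Multiset.mem_map.mp hx
        exact hone _ (haT0 s hs)
      rw [h0, one_mul]
      rw [Finset.prod_congr rfl fun i _ => key i, Finset.prod_const, Finset.card_univ,
        Fintype.card_fin, ← WithZero.coe_pow, WithZero.coe_inj, ← ofAdd_nsmul]
      congr 1
      simp
    intro hle
    have hfa : (((T0 + ∑ i, T i).map fun r => X - C r).prod).eval a ∈ Q ^ (e + 1) :=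
      hle (Ideal.subset_span ⟨a, rfl⟩)
    rw [heval] at hfa
    have := (hmem _ (e + 1)).mp hfa
    rw [hval, WithZero.coe_le_coe, ofAdd_le] at this
    push_cast at this
    omega
end

section
/- Let D be a Dedekind domain with quotient field K and let f ∈ Int(D) be of the form f = (∏_{i ∈ I} fᵢ)/c, where c is a nonzero nonunit of D, I is a finite nonempty set, each fᵢ ∈ D[x] is irreducible in K[x], and d(∏_{i ∈ I} fᵢ) = cD. Let 𝒫 ⊆ maxspec(D) be the finite set of maximal ideals containing c. If f = g₁⋯g_m is any factorization of f into (not necessarily irreducible) nonunits of Int(D), then each gⱼ has the form gⱼ = aⱼ ∏_{i ∈ Iⱼ} fᵢ with ∅ ≠ Iⱼ ⊆ I and aⱼ ∈ K, where I₁ ⊎ ⋯ ⊎ I_m = I, a₁⋯a_m = c⁻¹, and moreover: (1) v_P(aⱼ) ≤ 0 for every maximal ideal P of D and every 1 ≤ j ≤ m; and (2) v_P(aⱼ) = 0 for every maximal ideal P ∉ 𝒫 and every 1 ≤ j ≤ m. -/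
set_option linter.unusedSectionVars false

open Polynomial

variable (D : Type*) [CommRing D] [IsDomain D]
variable (K : Type*) [Field K] [Algebra D K] [IsFractionRing D K]

/-- The ring of integer-valued polynomials `Int(D) = {f ∈ K[X] | f(D) ⊆ D}`,
as a subring of `K[X]`. -/
def IntD : Subring (Polynomial K) where
  carrier := {f | ∀ a : D, f.eval (algebraMap D K a) ∈ (algebraMap D K).range}
  zero_mem' := fun a => by rw [eval_zero]; exact zero_mem _
  one_mem' := fun a => by rw [eval_one]; exact one_mem _
  add_mem' := fun {f g} hf hg a => by rw [eval_add]; exact add_mem (hf a) (hg a)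
  mul_mem' := fun {f g} hf hg a => by rw [eval_mul]; exact mul_mem (hf a) (hg a)
  neg_mem' := fun {f} hf a => by rw [eval_neg]; exact neg_mem (hf a)

section Aux

variable {L : Type*} [Field L] {ι' : Type*} [DecidableEq ι']

/-- Splitting a product of irreducibles (times a constant) into two factors. -/
lemma aux_split_two (p : ι' → Polynomial L) :
    ∀ (s : Finset ι'), (∀ i ∈ s, Irreducible (p i)) → ∀ (u : L), u ≠ 0 →
    ∀ (A B : Polynomial L), A * B = C u * ∏ i ∈ s, p i →
    ∃ t ⊆ s, ∃ a b : L, A = C a * ∏ i ∈ t, p i ∧ B = C b * ∏ i ∈ s \ t, p i ∧ a * b = u := by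
  intro s
  induction s using Finset.induction_on with
  | empty =>
    intro _ u hu A B h
    rw [Finset.prod_empty, mul_one] at h
    have hCu : IsUnit (C u : Polynomial L) := isUnit_C.mpr (isUnit_iff_ne_zero.mpr hu)
    have hA : IsUnit A := isUnit_of_mul_isUnit_left (h ▸ hCu)
    have hB : IsUnit B := isUnit_of_mul_isUnit_right (h ▸ hCu)
    obtain ⟨a, -, ha⟩ := Polynomial.isUnit_iff.mp hA
    obtain ⟨b, -, hb⟩ := Polynomial.isUnit_iff.mp hB
    refine ⟨∅, Finset.Subset.refl _, a, b,
      by rw [Finset.prod_empty, mul_one, ha],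
      by rw [Finset.sdiff_empty, Finset.prod_empty, mul_one, hb], ?_⟩
    have : C (a * b) = C u := by rw [C_mul, ha, hb, h]
    exact C_inj.mp this
  | @insert i s' hi ih =>
    intro hp u hu A B h
    have hpi : Prime (p i) := (hp i (Finset.mem_insert_self i s')).prime
    have hne : p i ≠ 0 := hpi.ne_zero
    have hdvd : p i ∣ A * B := by
      rw [h, Finset.prod_insert hi]
      exact ⟨C u * ∏ k ∈ s', p k, by ring⟩
    have hp' : ∀ k ∈ s', Irreducible (p k) := fun k hk => hp k (Finset.mem_insert_of_mem hk)
    rcases hpi.2.2 A B hdvd with ⟨A', rfl⟩ | ⟨B', rfl⟩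
    · have h' : A' * B = C u * ∏ k ∈ s', p k := by
        apply mul_left_cancel₀ hne
        calc p i * (A' * B) = p i * A' * B := by ring
          _ = C u * ∏ k ∈ insert i s', p k := h
          _ = p i * (C u * ∏ k ∈ s', p k) := by rw [Finset.prod_insert hi]; ring
      obtain ⟨t, hts, a, b, hA, hB, hab⟩ := ih hp' u hu A' B h'
      have hit : i ∉ t := fun hc => hi (hts hc)
      refine ⟨insert i t, Finset.insert_subset_insert i hts, a, b, ?_, ?_, hab⟩
      · rw [Finset.prod_insert hit, hA]; ring
      · have hset : insert i s' \ insert i t = s' \ t := by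
          ext x
          simp only [Finset.mem_sdiff, Finset.mem_insert, not_or]
          constructor
          · rintro ⟨hx | hx, hx2, hx3⟩
            · exact absurd hx hx2
            · exact ⟨hx, hx3⟩
          · rintro ⟨hx, hx3⟩
            exact ⟨Or.inr hx, fun he => hi (he ▸ hx), hx3⟩
        rw [hset, hB]
    · have h' : A * B' = C u * ∏ k ∈ s', p k := by
        apply mul_left_cancel₀ hne
        calc p i * (A * B') = A * (p i * B') := by ring
          _ = C u * ∏ k ∈ insert i s', p k := h
          _ = p i * (C u * ∏ k ∈ s', p k) := by rw [Finset.prod_insert hi]; ring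
      obtain ⟨t, hts, a, b, hA, hB, hab⟩ := ih hp' u hu A B' h'
      have hit : i ∉ t := fun hc => hi (hts hc)
      refine ⟨t, hts.trans (Finset.subset_insert i s'), a, b, hA, ?_, hab⟩
      have hnotmem : i ∉ s' \ t := fun hc => hi (Finset.mem_sdiff.mp hc).1
      have hset : insert i s' \ t = insert i (s' \ t) := by
        ext x
        simp only [Finset.mem_sdiff, Finset.mem_insert]
        constructor
        · rintro ⟨hx | hx, hx2⟩
          · exact Or.inl hx
          · exact Or.inr ⟨hx, hx2⟩
        · rintro (rfl | ⟨hx, hx2⟩)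
          · exact ⟨Or.inl rfl, hit⟩
          · exact ⟨Or.inr hx, hx2⟩
      rw [hset, Finset.prod_insert hnotmem, hB]; ring

/-- Splitting a product of irreducibles (times a constant) into `m` factors. -/
lemma aux_multi (p : ι' → Polynomial L) (hp : ∀ i, Irreducible (p i)) :
    ∀ (m : ℕ) (s : Finset ι') (u : L), u ≠ 0 → ∀ (g : Fin m → Polynomial L),
    ∏ j, g j = C u * ∏ i ∈ s, p i →
    ∃ (T : Fin m → Finset ι') (a : Fin m → L),
      (∀ j k, j ≠ k → Disjoint (T j) (T k)) ∧
      Finset.univ.biUnion T = s ∧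
      (∀ j, g j = C (a j) * ∏ i ∈ T j, p i) ∧ ∏ j, a j = u := by
  intro m
  induction m with
  | zero =>
    intro s u hu g h
    rw [Fin.prod_univ_zero] at h
    have hs : s = ∅ := by
      by_contra hne
      obtain ⟨i, hi⟩ := Finset.nonempty_iff_ne_empty.mpr hne
      have hunit : IsUnit (C u * ∏ k ∈ s, p k) := h ▸ isUnit_one
      have : IsUnit (p i) :=
        isUnit_of_dvd_unit (Finset.dvd_prod_of_mem p hi) (isUnit_of_mul_isUnit_right hunit)
      exact (hp i).not_isUnit this
    subst hs
    rw [Finset.prod_empty, mul_one] at h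
    have hu1 : u = 1 := C_inj.mp (by rw [← h, C_1])
    exact ⟨fun j => j.elim0, fun j => j.elim0, fun j => j.elim0, by simp, fun j => j.elim0,
      by simp [hu1]⟩
  | succ n ih =>
    intro s u hu g h
    rw [Fin.prod_univ_succ] at h
    obtain ⟨t, hts, a0, b, hA, hB, hab⟩ :=
      aux_split_two p s (fun i _ => hp i) u hu (g 0) (∏ j : Fin n, g j.succ) h
    have hb : b ≠ 0 := fun h0 => hu (by rw [← hab, h0, mul_zero])
    obtain ⟨T', a', hdisj', hbi', hg', hpa'⟩ := ih (s \ t) b hb (fun j => g j.succ) hB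
    have hsub' : ∀ j', T' j' ⊆ s \ t := fun j' =>
      hbi' ▸ Finset.subset_biUnion_of_mem T' (Finset.mem_univ j')
    refine ⟨Fin.cases t T', Fin.cases a0 a', ?_, ?_, ?_, ?_⟩
    · intro j k hjk
      rcases Fin.eq_zero_or_eq_succ j with rfl | ⟨j', rfl⟩ <;>
        rcases Fin.eq_zero_or_eq_succ k with rfl | ⟨k', rfl⟩
      · exact absurd rfl hjk
      · simp only [Fin.cases_zero, Fin.cases_succ]
        exact Finset.disjoint_sdiff.mono_right (hsub' k')
      · simp only [Fin.cases_zero, Fin.cases_succ]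
        exact (Finset.disjoint_sdiff.mono_right (hsub' j')).symm
      · simp only [Fin.cases_succ]
        exact hdisj' j' k' (fun he => hjk (by rw [he]))
    · ext x
      simp only [Finset.mem_biUnion, Finset.mem_univ, true_and]
      constructor
      · rintro ⟨j, hj⟩
        rcases Fin.eq_zero_or_eq_succ j with rfl | ⟨j', rfl⟩
        · exact hts (by simpa using hj)
        · exact (Finset.mem_sdiff.mp (hsub' j' (by simpa using hj))).1
      · intro hx
        by_cases hxt : x ∈ t
        · exact ⟨0, by simpa using hxt⟩
        · have hmem : x ∈ Finset.univ.biUnion T' := by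
            rw [hbi']; exact Finset.mem_sdiff.mpr ⟨hx, hxt⟩
          obtain ⟨j', -, hj'⟩ := Finset.mem_biUnion.mp hmem
          exact ⟨j'.succ, by simpa using hj'⟩
    · intro j
      rcases Fin.eq_zero_or_eq_succ j with rfl | ⟨j', rfl⟩
      · simpa using hA
      · simpa using hg' j'
    · rw [Fin.prod_univ_succ]
      simp only [Fin.cases_zero, Fin.cases_succ]
      rw [hpa', hab]

end Aux

open IsDedekindDomain in
/-- **Lemma (shape of factorizations).** Let `D` be a Dedekind domain with quotient
field `K`, and `f = (∏_{i ∈ I} fᵢ)/c ∈ Int(D)` with `c ∈ D` a nonzero nonunit, each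
`fᵢ ∈ D[X]` irreducible in `K[X]`, and `d(∏ᵢ fᵢ) = cD`. If `f = g₁ ⋯ g_m` with each
`gⱼ` a nonunit of `Int(D)`, then `gⱼ = aⱼ ∏_{i ∈ Iⱼ} fᵢ` with `∅ ≠ Iⱼ ⊆ I`,
`aⱼ ∈ K`, `I = I₁ ⊎ ⋯ ⊎ I_m`, `a₁ ⋯ a_m = c⁻¹`, and in additive notation
`v_P(aⱼ) ≤ 0` for every maximal ideal `P` (multiplicatively, `1 ≤ ‖aⱼ‖_P`) and
`v_P(aⱼ) = 0` (i.e. `‖aⱼ‖_P = 1`) whenever `c ∉ P`. -/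
theorem shape_of_factorizations_IntD
    [IsDedekindDomain D] (hD : ¬ IsField D)
    (ι : Type*) [Fintype ι] [Nonempty ι] [DecidableEq ι]
    (f : ι → Polynomial D)
    (hfirr : ∀ i, Irreducible ((f i).map (algebraMap D K)))
    (c : D) (hc0 : c ≠ 0) (hcu : ¬ IsUnit c)
    (hfd : fixDiv D (∏ i, f i) = Ideal.span {c})
    (F : Polynomial K)
    (hF : F = C ((algebraMap D K c)⁻¹) * (∏ i, f i).map (algebraMap D K))
    (hFmem : F ∈ IntD D K)
    (m : ℕ) (hm : 1 ≤ m) (g : Fin m → Polynomial K)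
    (hgmem : ∀ j, g j ∈ IntD D K)
    (hgnu : ∀ j, ¬ IsUnit (⟨g j, hgmem j⟩ : IntD D K))
    (hprod : ∏ j, g j = F) :
    ∃ (Ij : Fin m → Finset ι) (a : Fin m → K),
      (∀ j, (Ij j).Nonempty) ∧
      (∀ j k, j ≠ k → Disjoint (Ij j) (Ij k)) ∧
      (Finset.univ.biUnion Ij = (Finset.univ : Finset ι)) ∧
      (∀ j, g j = C (a j) * ∏ i ∈ Ij j, (f i).map (algebraMap D K)) ∧
      (∏ j, a j = (algebraMap D K c)⁻¹) ∧
      (∀ (P : Ideal D) (hP : P.IsMaximal) (hP0 : P ≠ ⊥) (j : Fin m),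
        1 ≤ (⟨P, hP.isPrime, hP0⟩ : HeightOneSpectrum D).valuation K (a j)) ∧
      (∀ (P : Ideal D) (hP : P.IsMaximal) (hP0 : P ≠ ⊥), c ∉ P → ∀ j : Fin m,
        (⟨P, hP.isPrime, hP0⟩ : HeightOneSpectrum D).valuation K (a j) = 1) := by
  classical
  set φ := algebraMap D K with hφ
  have hinj : Function.Injective φ := IsFractionRing.injective D K
  have hcK : φ c ≠ 0 := fun h0 => hc0 (hinj (by rw [h0, map_zero]))
  have hFeq : ∏ j, g j = C ((φ c)⁻¹) * ∏ i, (f i).map φ := by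
    rw [hprod, hF, Polynomial.map_prod]
  obtain ⟨T, a, hdisj, hbi, hgT, hpa⟩ :=
    aux_multi (fun i => (f i).map φ) hfirr m Finset.univ (φ c)⁻¹ (inv_ne_zero hcK) g hFeq
  -- basic facts
  have hev : ∀ (q : Polynomial D) (d : D), (q.map φ).eval (φ d) = φ (q.eval d) := by
    intro q d
    rw [eval_map, eval₂_at_apply]
  have hvalF : ∀ d : D, F.eval (φ d) = (φ c)⁻¹ * φ ((∏ i, f i).eval d) := by
    intro d
    rw [hF, eval_mul, eval_C, hev]
  have hgval : ∀ (k : Fin m) (d : D), (g k).eval (φ d) ∈ φ.range := fun k d => hgmem k d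
  -- the fixed divisor fact
  have hcmem : c ∈ Ideal.span (Set.range fun d : D => (∏ i, f i).eval d) := by
    have h1 : c ∈ fixDiv D (∏ i, f i) := by
      rw [hfd]; exact Ideal.mem_span_singleton_self c
    exact h1
  obtain ⟨l, hlsupp, hlsum⟩ := Submodule.mem_span_set.mp hcmem
  have hsumc : ∑ y ∈ l.support, φ (l y) * φ y = φ c := by
    conv_rhs => rw [← hlsum]
    rw [Finsupp.sum, map_sum]
    exact Finset.sum_congr rfl fun y _ => by rw [smul_eq_mul, map_mul]
  -- Claim A : all valuations of the a j are ≥ 1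
  have claimA : ∀ (v' : HeightOneSpectrum D) (j : Fin m), 1 ≤ v'.valuation K (a j) := by
    intro v' j
    by_contra hlt
    rw [not_le] at hlt
    have hvle : ∀ x : K, x ∈ φ.range → v'.valuation K x ≤ 1 := by
      rintro x ⟨r, rfl⟩; exact v'.valuation_le_one r
    have hFlt : ∀ d : D, v'.valuation K (F.eval (φ d)) < 1 := by
      intro d
      have hFd : F.eval (φ d)
          = (g j).eval (φ d) * ∏ k ∈ Finset.univ.erase j, (g k).eval (φ d) := by
        rw [← hprod, eval_prod, ← Finset.mul_prod_erase Finset.univ _ (Finset.mem_univ j)]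
      rw [hFd, map_mul]
      have h1 : v'.valuation K ((g j).eval (φ d)) < 1 := by
        rw [hgT j, eval_mul, eval_C, map_mul]
        have h2 : v'.valuation K ((∏ i ∈ T j, (f i).map φ).eval (φ d)) ≤ 1 := by
          rw [eval_prod, map_prod]
          exact Finset.prod_le_one' fun i _ => hvle _ ⟨(f i).eval d, (hev (f i) d).symm⟩
        calc v'.valuation K (a j) * v'.valuation K ((∏ i ∈ T j, (f i).map φ).eval (φ d))
            ≤ v'.valuation K (a j) * 1 := mul_le_mul_right h2 _
          _ = v'.valuation K (a j) := mul_one _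
          _ < 1 := hlt
      have h2 : v'.valuation K (∏ k ∈ Finset.univ.erase j, (g k).eval (φ d)) ≤ 1 := by
        rw [map_prod]
        exact Finset.prod_le_one' fun k _ => hvle _ (hgval k d)
      calc v'.valuation K ((g j).eval (φ d))
            * v'.valuation K (∏ k ∈ Finset.univ.erase j, (g k).eval (φ d))
          ≤ v'.valuation K ((g j).eval (φ d)) * 1 := mul_le_mul_right h2 _
        _ = v'.valuation K ((g j).eval (φ d)) := mul_one _
        _ < 1 := h1
    have hvc0 : v'.valuation K (φ c) ≠ 0 := (Valuation.ne_zero_iff _).mpr hcK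
    have hlt2 : v'.valuation K (φ c) < v'.valuation K (φ c) := by
      conv_lhs => rw [← hsumc]
      refine Valuation.map_sum_lt _ hvc0 ?_
      intro y hy
      obtain ⟨d, hd⟩ := hlsupp hy
      have hyval : φ y = φ c * F.eval (φ d) := by
        rw [← hd, hvalF d, ← mul_assoc, mul_inv_cancel₀ hcK, one_mul]
      calc v'.valuation K (φ (l y) * φ y)
          = v'.valuation K (φ (l y)) * v'.valuation K (φ y) := map_mul _ _ _
        _ ≤ 1 * v'.valuation K (φ y) := mul_le_mul_left (hvle _ ⟨l y, rfl⟩) _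
        _ = v'.valuation K (φ y) := one_mul _
        _ = v'.valuation K (φ c) * v'.valuation K (F.eval (φ d)) := by rw [hyval, map_mul]
        _ < v'.valuation K (φ c) * 1 := mul_lt_mul_of_pos_left (hFlt d) (zero_lt_iff.mpr hvc0)
        _ = v'.valuation K (φ c) := mul_one _
    exact absurd hlt2 (lt_irrefl _)
  have ha0 : ∀ j, a j ≠ 0 := by
    intro j hj
    apply inv_ne_zero hcK
    rw [← hpa]
    exact Finset.prod_eq_zero (Finset.mem_univ j) hj
  -- Claim : each T j is nonempty
  have hTne : ∀ j, (T j).Nonempty := by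
    intro j
    rw [Finset.nonempty_iff_ne_empty]
    intro hTj
    have hgj : g j = C (a j) := by rw [hgT j, hTj, Finset.prod_empty, mul_one]
    set h := ∏ k ∈ Finset.univ.erase j, g k with hh
    have hhval : ∀ d : D, h.eval (φ d) ∈ φ.range := by
      intro d
      rw [hh, eval_prod]
      exact prod_mem fun k _ => hgval k d
    have hFgh : ∀ d : D, F.eval (φ d) = a j * h.eval (φ d) := by
      intro d
      rw [← hprod, ← Finset.mul_prod_erase Finset.univ g (Finset.mem_univ j), eval_mul,
        hgj, eval_C]
    set w : D → D := fun y => if hy : ∃ d : D, (∏ i, f i).eval d = y then hy.choose else 0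
      with hw
    have hwspec : ∀ y ∈ l.support, (∏ i, f i).eval (w y) = y := by
      intro y hy
      obtain ⟨d, hd⟩ := hlsupp hy
      have hex : ∃ d : D, (∏ i, f i).eval d = y := ⟨d, hd⟩
      rw [hw]
      simp only [dif_pos hex]
      exact hex.choose_spec
    set β := ∑ y ∈ l.support, φ (l y) * h.eval (φ (w y)) with hβ
    have hβmem : β ∈ φ.range := by
      rw [hβ]
      exact sum_mem fun y _ => mul_mem ⟨l y, rfl⟩ (hhval (w y))
    have haβ : a j * β = 1 := by
      rw [hβ, Finset.mul_sum]
      have hterm : ∀ y ∈ l.support,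
          a j * (φ (l y) * h.eval (φ (w y))) = (φ c)⁻¹ * (φ (l y) * φ y) := by
        intro y hy
        have h1 : a j * h.eval (φ (w y)) = (φ c)⁻¹ * φ y := by
          rw [← hFgh (w y), hvalF (w y), hwspec y hy]
        calc a j * (φ (l y) * h.eval (φ (w y)))
            = φ (l y) * (a j * h.eval (φ (w y))) := by ring
          _ = φ (l y) * ((φ c)⁻¹ * φ y) := by rw [h1]
          _ = (φ c)⁻¹ * (φ (l y) * φ y) := by ring
      rw [Finset.sum_congr rfl hterm, ← Finset.mul_sum, hsumc, inv_mul_cancel₀ hcK]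
    apply hgnu j
    have hCβ : C β ∈ IntD D K := fun d => by rw [eval_C]; exact hβmem
    refine IsUnit.of_mul_eq_one (⟨C β, hCβ⟩ : IntD D K) (Subtype.ext ?_)
    show g j * C β = 1
    rw [hgj, ← C_mul, haβ, C_1]
  -- Claim B : valuations at primes not containing c are exactly 1
  have claimB : ∀ (v' : HeightOneSpectrum D), c ∉ v'.asIdeal → ∀ j,
      v'.valuation K (a j) = 1 := by
    intro v' hc j
    have hvc : v'.valuation K (φ c) = 1 := by
      refine le_antisymm (v'.valuation_le_one c) ?_
      by_contra hlt
      rw [not_le] at hlt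
      exact hc (Ideal.dvd_span_singleton.mp ((v'.valuation_lt_one_iff_dvd c).mp hlt))
    have hprodv : ∏ k, v'.valuation K (a k) = 1 := by
      rw [← map_prod, hpa, map_inv₀, hvc, inv_one]
    refine le_antisymm ?_ (claimA v' j)
    have h1 : 1 ≤ ∏ k ∈ Finset.univ.erase j, v'.valuation K (a k) :=
      Finset.one_le_prod' fun k _ => claimA v' k
    calc v'.valuation K (a j)
        ≤ v'.valuation K (a j) * ∏ k ∈ Finset.univ.erase j, v'.valuation K (a k) :=
          le_mul_of_one_le_right' h1
      _ = 1 := by rw [Finset.mul_prod_erase Finset.univ (fun k => v'.valuation K (a k)) (Finset.mem_univ j), hprodv]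
  refine ⟨T, a, hTne, hdisj, hbi, hgT, hpa, ?_, ?_⟩
  · intro P hP hP0 j
    exact claimA ⟨P, hP.isPrime, hP0⟩ j
  · intro P hP hP0 hcP j
    exact claimB ⟨P, hP.isPrime, hP0⟩ hcP j
end

section
/- Let D be an integral domain with quotient field K, let g ∈ D[x], and let P be a prime ideal of D such that d(g) ⊆ P. Then either all coefficients of g lie in P (i.e., g ∈ P[x]), or the residue ring D/P has at most deg(g) elements. -/
set_option linter.unusedSectionVars false

open Polynomial

variable (D : Type*) [CommRing D] [IsDomain D]

/-- **Remark.** Let `D` be an integral domain with quotient field `K`, `g ∈ D[X]` and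
`P` a prime ideal of `D` with `d(g) ⊆ P`. Then either all coefficients of `g` lie in
`P`, or the residue ring `D ⧸ P` has at most `deg g` elements. -/
theorem coeffs_mem_or_index_le_of_fixDiv_le_prime
    (K : Type*) [Field K] [Algebra D K] [IsFractionRing D K]
    (g : Polynomial D) (P : Ideal D) (hP : P.IsPrime)
    (h : fixDiv D g ≤ P) :
    (∀ n : ℕ, g.coeff n ∈ P) ∨ Cardinal.mk (D ⧸ P) ≤ (g.natDegree : Cardinal) := by
  classical
  set f := Ideal.Quotient.mk P
  set gbar : Polynomial (D ⧸ P) := g.map f with hg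
  -- every element of D ⧸ P is a root of gbar
  have hroot : ∀ x : D ⧸ P, gbar.IsRoot x := by
    intro x
    obtain ⟨a, rfl⟩ := Ideal.Quotient.mk_surjective x
    have : g.eval a ∈ P := h (Ideal.subset_span ⟨a, rfl⟩)
    have := (Ideal.Quotient.eq_zero_iff_mem).2 this
    simpa [gbar, f, Polynomial.IsRoot, Polynomial.eval_map, Polynomial.eval₂_hom] using this
  by_cases hz : gbar = 0
  · left
    intro n
    have : gbar.coeff n = 0 := by rw [hz]; simp
    rw [hg, Polynomial.coeff_map] at this
    exact Ideal.Quotient.eq_zero_iff_mem.1 this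
  · right
    haveI := hP
    have hfin : (Set.univ : Set (D ⧸ P)).Finite := by
      have := Polynomial.finite_setOf_isRoot hz
      have huniv : (Set.univ : Set (D ⧸ P)) = {x | gbar.IsRoot x} :=
        Set.eq_of_subset_of_subset (fun x _ => hroot x) (fun _ _ => trivial)
      rw [huniv]; exact this
    haveI : Fintype (D ⧸ P) := hfin.fintype.ofEquiv _ (Equiv.Set.univ _)
    have hcard : Fintype.card (D ⧸ P) ≤ gbar.natDegree := by
      have : (Finset.univ : Finset (D ⧸ P)) ⊆ gbar.roots.toFinset := by
        intro x _
        rw [Multiset.mem_toFinset, Polynomial.mem_roots hz]; exact hroot x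
      calc Fintype.card (D ⧸ P) = (Finset.univ : Finset (D ⧸ P)).card := rfl
        _ ≤ gbar.roots.toFinset.card := Finset.card_le_card this
        _ ≤ Multiset.card gbar.roots := Multiset.toFinset_card_le _
        _ ≤ gbar.natDegree := Polynomial.card_roots' gbar
    have hdeg : gbar.natDegree ≤ g.natDegree := Polynomial.natDegree_map_le
    have : Fintype.card (D ⧸ P) ≤ g.natDegree := hcard.trans hdeg
    calc Cardinal.mk (D ⧸ P) = (Fintype.card (D ⧸ P) : Cardinal) :=
          Cardinal.mk_fintype _
      _ ≤ (g.natDegree : Cardinal) := by exact_mod_cast this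
end

section
/- Let D be an integral domain with quotient field K and let g ∈ D[x] be irreducible as an element of K[x]. Then every factorization of g in Int(D) as a product of two (not necessarily irreducible) factors is, up to units and reordering, of the form g = c · (g/c) with c ∈ D and d(g) ⊆ cD; that is, if g = h₁·h₂ with h₁, h₂ ∈ Int(D), then one of the factors is a constant c ∈ D dividing the fixed divisor d(g) (i.e., d(g) ⊆ cD) and the other factor is g/c. -/
set_option linter.unusedSectionVars false

open Polynomial

variable (D : Type*) [CommRing D] [IsDomain D]
variable (K : Type*) [Field K] [Algebra D K] [IsFractionRing D K]

lemma aux_factor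
    (g : Polynomial D) (h₁ h₂ : Polynomial K)
    (hh₁ : h₁ ∈ IntD D K) (hh₂ : h₂ ∈ IntD D K)
    (heq : g.map (algebraMap D K) = h₁ * h₂) (hu : IsUnit h₁) :
    ∃ c : D, c ≠ 0 ∧ fixDiv D g ≤ Ideal.span {c} ∧
      h₁ = C (algebraMap D K c) ∧
      h₂ = C ((algebraMap D K c)⁻¹) * g.map (algebraMap D K) := by
  obtain ⟨u, hu', hC⟩ := Polynomial.isUnit_iff.mp hu
  have hune : u ≠ 0 := hu'.ne_zero
  have hinj := IsFractionRing.injective D K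
  obtain ⟨c, hc⟩ := hh₁ 0
  rw [← hC, eval_C] at hc
  have hcne : c ≠ 0 := by
    rintro rfl
    rw [map_zero] at hc
    exact hune hc.symm
  have h2eq : h₂ = C u⁻¹ * g.map (algebraMap D K) := by
    rw [heq, ← hC, ← mul_assoc, ← C_mul, inv_mul_cancel₀ hune, C_1, one_mul]
  refine ⟨c, hcne, ?_, by rw [← hC, hc], by rw [h2eq, hc]⟩
  rw [fixDiv, Ideal.span_le]
  rintro _ ⟨a, rfl⟩
  rw [SetLike.mem_coe, Ideal.mem_span_singleton]
  obtain ⟨d, hd⟩ := hh₂ a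
  rw [h2eq, eval_mul, eval_C, eval_map, eval₂_at_apply] at hd
  refine ⟨d, hinj ?_⟩
  rw [map_mul, hc, hd, ← mul_assoc, mul_inv_cancel₀ hune, one_mul]

/-- **Remark.** Let `D` be an integral domain with quotient field `K` and `g ∈ D[X]`
irreducible as an element of `K[X]`. Every factorization `g = h₁ · h₂` of `g` in
`Int(D)` into two (not necessarily irreducible) factors is of the form `g = c · (g/c)`
with `c ∈ D` and `d(g) ⊆ cD`: one of the two factors is the constant `c` and the other
one is `g/c`. -/
theorem factorization_of_Kirreducible
    (g : Polynomial D) (hg : Irreducible (g.map (algebraMap D K)))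
    (h₁ h₂ : Polynomial K) (hh₁ : h₁ ∈ IntD D K) (hh₂ : h₂ ∈ IntD D K)
    (heq : g.map (algebraMap D K) = h₁ * h₂) :
    ∃ c : D, c ≠ 0 ∧ fixDiv D g ≤ Ideal.span {c} ∧
      ((h₁ = C (algebraMap D K c) ∧
          h₂ = C ((algebraMap D K c)⁻¹) * g.map (algebraMap D K)) ∨
        (h₂ = C (algebraMap D K c) ∧
          h₁ = C ((algebraMap D K c)⁻¹) * g.map (algebraMap D K))) := by
  rcases hg.isUnit_or_isUnit heq with hu | hu
  · obtain ⟨c, h1, h2, h3, h4⟩ := aux_factor D K g h₁ h₂ hh₁ hh₂ heq hu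
    exact ⟨c, h1, h2, Or.inl ⟨h3, h4⟩⟩
  · obtain ⟨c, h1, h2, h3, h4⟩ := aux_factor D K g h₂ h₁ hh₂ hh₁ (by rw [heq, mul_comm]) hu
    exact ⟨c, h1, h2, Or.inr ⟨h3, h4⟩⟩
end

section
/- Let D be an integral domain with quotient field K and let g ∈ D[x] be irreducible as an element of K[x]. If g is image primitive, i.e., d(g) = D, then g is irreducible as an element of Int(D). -/
set_option linter.unusedSectionVars false

open Polynomial

variable (D : Type*) [CommRing D] [IsDomain D]
variable (K : Type*) [Field K] [Algebra D K] [IsFractionRing D K]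

theorem map_mem_IntD (g : Polynomial D) : g.map (algebraMap D K) ∈ IntD D K :=
  fun a => ⟨g.eval a, by rw [eval_map, eval₂_at_apply]⟩

lemma key_aux (g : Polynomial D) (hfd : fixDiv D g = ⊤)
    (f h : IntD D K) (hmul : (f : Polynomial K) * h = g.map (algebraMap D K))
    (hu : IsUnit (f : Polynomial K)) : IsUnit f := by
  obtain ⟨c, hc, hC⟩ := Polynomial.isUnit_iff.mp hu
  obtain ⟨d, hd⟩ := f.2 (0 : D)
  have hdc : algebraMap D K d = c := by
    rw [hd, ← hC, eval_C]
  have hdvd : ∀ a : D, d ∣ g.eval a := by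
    intro a
    obtain ⟨e, he⟩ := h.2 a
    refine ⟨e, IsFractionRing.injective D K ?_⟩
    have h1 : ((f : Polynomial K) * h).eval (algebraMap D K a)
        = (g.map (algebraMap D K)).eval (algebraMap D K a) := by rw [hmul]
    rw [eval_mul, ← hC, eval_C, eval_map, eval₂_at_apply, ← hdc, ← he, ← map_mul] at h1
    exact h1.symm
  have hspan : Ideal.span {d} = ⊤ := by
    rw [eq_top_iff, ← hfd, fixDiv, Ideal.span_le]
    rintro _ ⟨a, rfl⟩
    exact Ideal.mem_span_singleton.mpr (hdvd a)
  have hdu : IsUnit d := Ideal.span_singleton_eq_top.mp hspan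
  obtain ⟨e, he⟩ := isUnit_iff_exists_inv.mp hdu
  refine isUnit_iff_exists_inv.mpr ⟨⟨C (algebraMap D K e), fun a => ⟨e, by simp⟩⟩, ?_⟩
  apply Subtype.ext
  show (f : Polynomial K) * C (algebraMap D K e) = 1
  rw [← hC, ← hdc, ← map_mul, ← map_mul, he, map_one, map_one]

/-- **Remark.** Let `D` be an integral domain with quotient field `K` and `g ∈ D[X]`
irreducible as an element of `K[X]`. If `g` is image primitive, i.e. `d(g) = D`,
then `g` is irreducible as an element of `Int(D)`. -/
theorem irreducible_in_IntD_of_image_primitive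
    (g : Polynomial D) (hg : Irreducible (g.map (algebraMap D K)))
    (hfd : fixDiv D g = ⊤) :
    Irreducible (⟨g.map (algebraMap D K), map_mem_IntD D K g⟩ : IntD D K) := by
  constructor
  · intro hu
    exact hg.not_isUnit (hu.map (IntD D K).subtype)
  · rintro a b hab
    have hab' : (a : Polynomial K) * b = g.map (algebraMap D K) := by
      have := congrArg Subtype.val hab
      exact this.symm
    rcases hg.isUnit_or_isUnit hab'.symm with hu | hu
    · exact Or.inl (key_aux D K g hfd a b hab' hu)
    · exact Or.inr (key_aux D K g hfd b a (by rw [mul_comm]; exact hab') hu)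
end
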